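/- (Local well-foundedness of conditions) Let r ∈ ℙ and let σ ∈ dom(r). Then the tree T_σ = {τ ∈ R^{<ω} : σ⌢τ ∈ dom(r), and for every proper initial segment ρ of τ such that σ⌢ρ is nonempty of odd length, r((σ⌢ρ)⁻)₀ ≠ ∞ and r(σ⌢ρ)₀ < r((σ⌢ρ)⁻)₀} is well-founded: there is no infinite sequence f of elements of R all of whose finite initial segments lie in T_σ. -/

import Mathlib

/-- Baire space: the set of functions `ℕ → ℕ`. -/
abbrev Baire : Type := ℕ → ℕ

/-- `ω₂* = ω₂ ∪ {∞}`, with `none` playing the role of `∞`. -/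
abbrev OStar : Type 1 := Option Ordinal

/-- The relation `<` on `ω₂*`, extending the ordinal order by `x < ∞` for every `x`
(including `∞ < ∞`). -/
def ltStar : OStar → OStar → Prop
  | _, none => True
  | none, some _ => False
  | some a, some b => a < b

/-- `ω₂`, the second uncountable initial ordinal. -/
noncomputable def omega2 : Ordinal := (Cardinal.aleph 2).ord

/-- A tag belongs to `ω₂* = ω₂ ∪ {∞}`: if it is an ordinal, it is below `ω₂`. -/
def InO2Star (x : OStar) : Prop := ∀ β : Ordinal, x = some β → β < omega2

/-- Partial maps from `R^{<ω}` to `ω₂* × ω₂*` (conditions are such partial maps). -/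
abbrev PC : Type 1 := List Baire →. (OStar × OStar)

/-- Membership in the forcing `ℙ`: `p` is a partial map from `R^{<ω}` to `ω₂* × ω₂*`
such that (i) its domain is a countable subtree of `R^{<ω}` containing `⟨⟩`, with
`p(⟨⟩) = (∞, ∞)` and all tags in `ω₂*`; (ii) for nonempty `σ` in the domain, the second tag
is unchanged from `σ⁻` to `σ` when `|σ|` is odd, and the first tag is unchanged when `|σ|`
is even; and (iii) whenever `σ⌢⟨a,b⟩` is in the domain with `|σ|` even, if `p(σ)₀ ≠ ∞` and
`p(σ⌢⟨a,b⟩)₀ < p(σ)₀` then `p(σ⌢⟨a,b⟩)₁ < p(σ)₁`. -/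
def InP (p : PC) : Prop :=
  p.Dom.Countable ∧
  (∀ σ ∈ p.Dom, ∀ τ : List Baire, τ <+: σ → τ ∈ p.Dom) ∧
  (((none, none) : OStar × OStar) ∈ p ([] : List Baire)) ∧
  (∀ σ ∈ p.Dom, ∀ x ∈ p σ, InO2Star x.1 ∧ InO2Star x.2) ∧
  (∀ σ : List Baire, σ ∈ p.Dom → σ ≠ [] → ∀ x ∈ p σ, ∀ y ∈ p σ.dropLast,
      (Odd σ.length → y.2 = x.2) ∧ (Even σ.length → y.1 = x.1)) ∧
  (∀ (σ : List Baire) (a b : Baire), σ ++ [a, b] ∈ p.Dom → Even σ.length →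
      ∀ x ∈ p σ, ∀ y ∈ p (σ ++ [a, b]), x.1 ≠ none → ltStar y.1 x.1 → ltStar y.2 x.2)

/-- The order on `ℙ` (reverse inclusion): `p ≤ q` iff `p` extends `q` as a partial function. -/
def Ple (p q : PC) : Prop := ∀ σ : List Baire, ∀ y ∈ q σ, y ∈ p σ

/-- `x ≥ α` in `ω₂*`: `x` is `∞` or an ordinal `≥ α`. -/
def GeStar (x : OStar) (α : Ordinal) : Prop :=
  x = none ∨ ∃ β : Ordinal, x = some β ∧ α ≤ β

/-- The coordinatewise retagging condition: tags `< α` are preserved exactly, and tags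
`≥ α` (including `∞`) remain `≥ α`. -/
def RetagAt (α : Ordinal) (x y : OStar) : Prop :=
  (∀ β : Ordinal, x = some β → β < α → y = some β) ∧ (GeStar x α → GeStar y α)

/-- `q` is an `α`-retagging of `p` (written `p ≈_α q`): same domain, and at every point of
the domain each coordinate satisfies the retagging condition. -/
def Retag (α : Ordinal) (p q : PC) : Prop :=
  p.Dom = q.Dom ∧
  ∀ σ : List Baire, σ ∈ p.Dom → ∀ x ∈ p σ, ∀ y ∈ q σ,
    RetagAt α x.1 y.1 ∧ RetagAt α x.2 y.2

/-- The coordinatewise `α`-projection on `ω₂*`: ordinals `< α` are kept, everything else is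
sent to `∞`. -/
noncomputable def projO (α : Ordinal) : OStar → OStar
  | none => none
  | some β => if β < α then some β else none

/-- The `α`-projection `p^α` of a condition `p`: same domain, tags projected by `projO α`. -/
noncomputable def projP (α : Ordinal) (p : PC) : PC :=
  fun σ => (p σ).map (fun x => (projO α x.1, projO α x.2))

/-- Membership in the subposet `ℙ_α`: conditions all of whose tags are either ordinals `< α`
or `∞`. -/
def InPa (α : Ordinal) (p : PC) : Prop :=
  InP p ∧ ∀ σ ∈ p.Dom, ∀ x ∈ p σ,
    (∀ β : Ordinal, x.1 = some β → β < α) ∧ (∀ β : Ordinal, x.2 = some β → β < α)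

/-- (Local well-foundedness of conditions) For `r ∈ ℙ` and `σ ∈ dom(r)`, the tree
`T_σ = {τ : σ⌢τ ∈ dom(r)` and along `τ` player Open never restarts according to `r}` is
well-founded: it has no infinite path. -/
theorem local_wellfoundedness (r : PC) (hr : InP r) (σ : List Baire) (hσ : σ ∈ r.Dom) :
    ¬ ∃ f : ℕ → Baire, ∀ n : ℕ,
        σ ++ List.ofFn (fun i : Fin n => f i) ∈ r.Dom ∧
        ∀ ρ : List Baire, ρ <+: List.ofFn (fun i : Fin n => f i) →
          ρ ≠ List.ofFn (fun i : Fin n => f i) → σ ++ ρ ≠ [] → Odd (σ ++ ρ).length →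
          ∀ x ∈ r (σ ++ ρ), ∀ y ∈ r ((σ ++ ρ).dropLast),
            y.1 ≠ none ∧ ltStar x.1 y.1 := by
  rintro ⟨f, hf⟩
  obtain ⟨-, -, -, -, hstep, -⟩ := hr
  set L : ℕ → List Baire := fun n => σ ++ List.ofFn (fun i : Fin n => f i) with hLdef
  have hofn : ∀ n : ℕ, (List.ofFn (fun i : Fin (n+1) => f i)) =
      (List.ofFn (fun i : Fin n => f i)) ++ [f n] := by
    intro n
    rw [List.ofFn_succ']
    simp [List.concat_eq_append]
  have hLsucc : ∀ n, L (n+1) = L n ++ [f n] := by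
    intro n; simp only [hLdef, hofn n, List.append_assoc]
  have hdom : ∀ n, L n ∈ r.Dom := fun n => (hf n).1
  have hlen : ∀ n, (L n).length = σ.length + n := by
    intro n; simp [hLdef]
  have hdrop : ∀ n, (L (n+1)).dropLast = L n := by
    intro n
    rw [hLsucc n]
    exact List.dropLast_concat
  have hne : ∀ n, L (n+1) ≠ [] := by
    intro n h
    have := congrArg List.length h
    rw [hlen] at this; simp at this
  set v : ℕ → OStar × OStar := fun n => (r (L n)).get (hdom n) with hvdef
  have hvmem : ∀ n, v n ∈ r (L n) := fun n => Part.get_mem _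
  have hvdrop : ∀ n, v n ∈ r ((L (n+1)).dropLast) := by
    intro n; rw [hdrop n]; exact hvmem n
  have hOdd : ∀ n, Odd (σ.length + (n+1)) →
      ∃ a b : Ordinal, (v (n+1)).1 = some a ∧ (v n).1 = some b ∧ a < b := by
    intro n hpar
    have hpre : (List.ofFn (fun i : Fin (n+1) => f i)) <+:
        (List.ofFn (fun i : Fin (n+2) => f i)) := by
      rw [hofn (n+1)]
      exact List.prefix_append _ _
    have hρne : (List.ofFn (fun i : Fin (n+1) => f i)) ≠
        (List.ofFn (fun i : Fin (n+2) => f i)) := by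
      intro h
      have := congrArg List.length h
      simp at this
    have hconc : σ ++ List.ofFn (fun i : Fin (n+1) => f i) = L (n+1) := rfl
    have h := (hf (n+2)).2 _ hpre hρne (by rw [hconc]; exact hne n)
      (by rw [hconc, hlen]; exact hpar) (v (n+1)) (by rw [hconc]; exact hvmem (n+1))
      (v n) (by rw [hconc]; exact hvdrop n)
    obtain ⟨h1, h2⟩ := h
    cases hb : (v n).1 with
    | none => exact absurd hb h1
    | some b =>
      cases ha : (v (n+1)).1 with
      | none => rw [ha, hb] at h2; exact absurd h2 (by simp [ltStar])
      | some a => rw [ha, hb] at h2; exact ⟨a, b, rfl, rfl, h2⟩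
  have hEven : ∀ n, Even (σ.length + (n+1)) → (v n).1 = (v (n+1)).1 := by
    intro n hpar
    exact (hstep (L (n+1)) (hdom (n+1)) (hne n) (v (n+1)) (hvmem (n+1)) (v n)
      (hvdrop n)).2 (by rw [hlen]; exact hpar)
  obtain ⟨c, hc1, hcodd⟩ : ∃ c, 1 ≤ c ∧ ∀ k : ℕ, Odd (σ.length + (2*k + c)) := by
    rcases Nat.even_or_odd σ.length with h | h
    · refine ⟨1, le_refl 1, fun k => ?_⟩
      rw [Nat.even_iff] at h; rw [Nat.odd_iff]; omega
    · refine ⟨2, by omega, fun k => ?_⟩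
      rw [Nat.odd_iff] at h ⊢; omega
  have htag : ∀ k, ∃ a : Ordinal, (v (2*k + c)).1 = some a := by
    intro k
    obtain ⟨n, hn⟩ : ∃ n, 2*k + c = n + 1 := ⟨2*k + c - 1, by omega⟩
    obtain ⟨a, b, ha, -, -⟩ := hOdd n (by rw [← hn]; exact hcodd k)
    exact ⟨a, by rw [hn]; exact ha⟩
  have hdec : ∀ k (a b : Ordinal), (v (2*k + c)).1 = some a →
      (v (2*(k+1) + c)).1 = some b → b < a := by
    intro k a b ha hb
    have he : (v (2*k+c)).1 = (v (2*k+c+1)).1 := by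
      refine hEven (2*k+c) ?_
      have := hcodd k
      rw [Nat.odd_iff] at this; rw [Nat.even_iff]; omega
    obtain ⟨a', b', ha', hb', hlt⟩ := hOdd (2*k+c+1) (by
      have := hcodd (k+1)
      rw [Nat.odd_iff] at this ⊢; omega)
    have h1 : 2*(k+1)+c = (2*k+c+1)+1 := by ring
    rw [h1] at hb
    have e1 : a' = b := Option.some.inj (ha'.symm.trans hb)
    have e2 : a = b' := Option.some.inj (ha.symm.trans (he.trans hb'))
    rw [e1] at hlt; rw [e2]; exact hlt
  have hSne : Set.Nonempty {β : Ordinal | ∃ k, (v (2*k + c)).1 = some β} := by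
    obtain ⟨a, ha⟩ := htag 0; exact ⟨a, 0, ha⟩
  obtain ⟨k, hk⟩ := Ordinal.lt_wf.min_mem _ hSne
  obtain ⟨b, hb⟩ := htag (k+1)
  exact Ordinal.lt_wf.not_lt_min {β : Ordinal | ∃ k, (v (2*k + c)).1 = some β} (x := b) ⟨k+1, hb⟩ (hdec k _ b hk hb)
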